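/- Let σ ≠ 0, R > 0, θ₀, z₀ ∈ ℝ, Θ₀ = (cos θ₀, sin θ₀), Θ₀⊥ = (sin θ₀, −cos θ₀). Let x = (x, y, z) ∈ ℝ³ with (x, y) ≠ Θ₀, set g = √((x − cos θ₀)² + (y − sin θ₀)²), v = (x − cos θ₀, y − sin θ₀, 0), w = sin θ₀·(x − cos θ₀) − cos θ₀·(y − sin θ₀), and e₃ = (0,0,1). Define r₁ = 2σ·(−(R/g³)·w·v + (1 + R/g)·(sin θ₀, −cos θ₀, 0)), r₂ = 2·(−((g+R)/g³)·v + (z − z₀)·e₃), and r₃ = 2σ·e₃. Then det(r₁, r₂, r₃) = −8σ²·((g+R)²/g⁴)·(cos θ₀·x + sin θ₀·y − 1). In particular, if √(x² + y²) < 1 then det(r₁, r₂, r₃) ≠ 0. -/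

import Mathlib

open Real

/-- Determinant of the `3 × 3` matrix with rows `a`, `b`, `c` in `ℝ × ℝ × ℝ`. -/
def det3 (a b c : ℝ × ℝ × ℝ) : ℝ :=
  a.1 * (b.2.1 * c.2.2 - b.2.2 * c.2.1) - a.2.1 * (b.1 * c.2.2 - b.2.2 * c.1) +
    a.2.2 * (b.1 * c.2.1 - b.2.1 * c.1)

/-- Immersion property of the left projection of the canonical relation of the lemon
transform `R`: determinant formula for the gradients `r₁ = ∇(∂Φ/∂θ₀)`, `r₂ = ∇t`,
`r₃ = ∇(∂Φ/∂z₀)`, and its nonvanishing in the open unit cylinder. -/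
theorem lemonR_leftProjection_immersion_det
    (σ R θ₀ z₀ x y z : ℝ) (hσ : σ ≠ 0) (hR : 0 < R)
    (hne : (x, y) ≠ (Real.cos θ₀, Real.sin θ₀))
    (g w : ℝ) (vv e₃ r₁ r₂ r₃ : ℝ × ℝ × ℝ)
    (hg : g = Real.sqrt ((x - Real.cos θ₀) ^ 2 + (y - Real.sin θ₀) ^ 2))
    (hw : w = Real.sin θ₀ * (x - Real.cos θ₀) - Real.cos θ₀ * (y - Real.sin θ₀))
    (hvv : vv = (x - Real.cos θ₀, y - Real.sin θ₀, 0))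
    (he₃ : e₃ = (0, 0, 1))
    (hr₁ : r₁ = (2 * σ) • ((-(R / g ^ 3) * w) • vv +
      (1 + R / g) • ((Real.sin θ₀, -Real.cos θ₀, 0) : ℝ × ℝ × ℝ)))
    (hr₂ : r₂ = (2 : ℝ) • ((-((g + R) / g ^ 3)) • vv + (z - z₀) • e₃))
    (hr₃ : r₃ = (2 * σ) • e₃) :
    det3 r₁ r₂ r₃ =
      -8 * σ ^ 2 * ((g + R) ^ 2 / g ^ 4) *
        (Real.cos θ₀ * x + Real.sin θ₀ * y - 1) ∧
    (Real.sqrt (x ^ 2 + y ^ 2) < 1 → det3 r₁ r₂ r₃ ≠ 0) := by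
  have hc : Real.cos θ₀ ^ 2 + Real.sin θ₀ ^ 2 = 1 := by
    rw [add_comm]; exact Real.sin_sq_add_cos_sq θ₀
  have hpos : 0 < (x - Real.cos θ₀) ^ 2 + (y - Real.sin θ₀) ^ 2 := by
    rcases eq_or_ne x (Real.cos θ₀) with h1 | h1
    · rcases eq_or_ne y (Real.sin θ₀) with h2 | h2
      · exact absurd (by rw [h1, h2]) hne
      · have h2' : y - Real.sin θ₀ ≠ 0 := sub_ne_zero.mpr h2
        positivity
    · have h1' : x - Real.cos θ₀ ≠ 0 := sub_ne_zero.mpr h1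
      positivity
  have hgpos : 0 < g := hg ▸ Real.sqrt_pos.mpr hpos
  have hg2 : g ^ 2 = (x - Real.cos θ₀) ^ 2 + (y - Real.sin θ₀) ^ 2 := by
    rw [hg, sq_sqrt hpos.le]
  have hdet : det3 r₁ r₂ r₃ =
      -8 * σ ^ 2 * ((g + R) ^ 2 / g ^ 4) *
        (Real.cos θ₀ * x + Real.sin θ₀ * y - 1) := by
    subst hvv he₃ hw
    subst hr₁ hr₂ hr₃
    simp only [det3, Prod.smul_mk, Prod.mk_add_mk, Prod.fst_add, Prod.snd_add,
      smul_eq_mul, Prod.smul_fst, Prod.smul_snd]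
    have hgne : g ≠ 0 := hgpos.ne'
    rw [show (Real.cos θ₀ * x + Real.sin θ₀ * y - 1)
        = Real.cos θ₀ * x + Real.sin θ₀ * y - (Real.cos θ₀ ^ 2 + Real.sin θ₀ ^ 2)
        from by rw [hc]]
    field_simp
    linear_combination (0 : ℝ) * hc
  refine ⟨hdet, fun hlt => ?_⟩
  have hxy : x ^ 2 + y ^ 2 < 1 := by
    have h0 : (0:ℝ) ≤ x ^ 2 + y ^ 2 := by positivity
    nlinarith [Real.sq_sqrt h0, Real.sqrt_nonneg (x ^ 2 + y ^ 2)]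
  have hlin : Real.cos θ₀ * x + Real.sin θ₀ * y - 1 < 0 := by
    nlinarith [sq_nonneg (Real.sin θ₀ * x - Real.cos θ₀ * y),
      sq_nonneg (Real.cos θ₀ * x + Real.sin θ₀ * y - 1), hc]
  rw [hdet]
  have h1 : 0 < (g + R) ^ 2 / g ^ 4 := by positivity
  have h2 : 0 < σ ^ 2 := pow_pos (abs_pos.mpr hσ) 2 |>.trans_eq (by rw [sq_abs])
  intro h
  nlinarith [mul_pos h2 h1]
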